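/- arXiv:1109.5556 — 6 statements merged into one kernel-verified Lean document; each statement's English description precedes it below -/
import Mathlib

section
/- For all m ∈ ℤ and n, n' ∈ ℕ one has 0 ≤ v^{m,0}_{n,n'} = v^{|m|,0}_{n,n'}; moreover, for all m, n, n' ∈ ℕ the matrix elements are monotone decreasing in m: v^{m,0}_{n,n'} ≥ v^{m+1,0}_{n,n'}. -/
open Real

/-- Pochhammer symbol `(x)_a = Γ(x+a)/Γ(x)` for real arguments. -/
noncomputable def poch (x a : ℝ) : ℝ := Real.Gamma (x + a) / Real.Gamma x

/-- Coulomb matrix elements `v^{m,0}_{n,n'}`. -/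
noncomputable def v0 (m : ℤ) (n n' : ℕ) : ℝ :=
  (1 / (Real.pi * Real.sqrt (poch ((n : ℝ) + 1) ((|m| : ℤ) : ℝ) *
      poch ((n' : ℝ) + 1) ((|m| : ℤ) : ℝ)))) *
    ∑ k ∈ Finset.range (min n n' + 1),
      poch ((k : ℝ) + 1) (((|m| : ℤ) : ℝ) - 1/2) /
        (poch ((n : ℝ) - (k : ℝ) + 1/2) (1/2) * poch ((n' : ℝ) - (k : ℝ) + 1/2) (1/2))

/-- Coulomb matrix elements `v^{m,1}_{n,n'}`. -/
noncomputable def v1 (m : ℤ) (n n' : ℕ) : ℝ :=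
  if 0 ≤ m then v0 (m + 1) n n' else v0 (m + 1) (n + 1) (n' + 1)

/-- The quadratic form `E_m[a]` at coupling `Z`. -/
noncomputable def Eform (Z : ℝ) (m : ℤ) (a : ℕ → ℝ) : ℝ :=
  (∑' n : ℕ, 2 * Real.sqrt ((n : ℝ) + ((max m 0 : ℤ) : ℝ) + 1) * a n ^ 2)
    - (Z / 2) * ∑' n : ℕ, ∑' n' : ℕ, a n * (v0 m n n' + v1 m n n') * a n'

/-- The critical coupling constant `Z_c`. -/
noncomputable def Zc : ℝ :=
  (Real.Gamma (1/4) ^ 4 / (8 * Real.pi ^ 2) + 8 * Real.pi ^ 2 / Real.Gamma (1/4) ^ 4)⁻¹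

lemma poch_pos {x a : ℝ} (hx : 0 < x) (hxa : 0 < x + a) : 0 < poch x a :=
  div_pos (Real.Gamma_pos_of_pos hxa) (Real.Gamma_pos_of_pos hx)

lemma poch_succ {x a : ℝ} (h : x + a ≠ 0) : poch x (a + 1) = poch x a * (x + a) := by
  unfold poch
  rw [show x + (a + 1) = (x + a) + 1 by ring, Real.Gamma_add_one h]
  ring

lemma key_ineq {a d x S : ℝ} (ha : 0 ≤ a) (hd : 0 < d) (hS : 0 < S) (hx : 0 ≤ x)
    (hxS : x ≤ S) : a * x / (d * S) ≤ a / d := by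
  rw [div_le_div_iff₀ (by positivity) hd]
  nlinarith [mul_le_mul_of_nonneg_left hxS (mul_nonneg ha hd.le)]

theorem v0_pos_symm_monotone :
    (∀ (m : ℤ) (n n' : ℕ), 0 ≤ v0 m n n' ∧ v0 m n n' = v0 |m| n n') ∧
    (∀ (m n n' : ℕ), v0 ((m : ℤ) + 1) n n' ≤ v0 (m : ℤ) n n') := by
  constructor
  · intro m n n'
    constructor
    · rw [v0]
      apply mul_nonneg
      · positivity
      · apply Finset.sum_nonneg
        intro k hk
        simp only [Finset.mem_range, Nat.lt_succ_iff, le_min_iff] at hk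
        have hkn : (k : ℝ) ≤ n := by exact_mod_cast hk.1
        have hkn' : (k : ℝ) ≤ n' := by exact_mod_cast hk.2
        have ha : (0 : ℝ) ≤ ((|m| : ℤ) : ℝ) := by positivity
        apply div_nonneg
        · exact (poch_pos (by positivity) (by linarith)).le
        · exact (mul_nonneg (poch_pos (by linarith) (by linarith)).le
            (poch_pos (by linarith) (by linarith)).le)
    · simp [v0, abs_abs]
  · intro m n n'
    have habs1 : |((m : ℤ) + 1)| = (m : ℤ) + 1 := abs_of_nonneg (by positivity)
    have habs : |(m : ℤ)| = (m : ℤ) := abs_of_nonneg (by positivity)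
    rw [v0, v0, habs1, habs]
    push_cast
    set M : ℝ := (m : ℝ) with hM
    have hM0 : 0 ≤ M := by positivity
    -- key positive quantities
    have hPn : 0 < poch ((n : ℝ) + 1) M := poch_pos (by positivity) (by linarith)
    have hPn' : 0 < poch ((n' : ℝ) + 1) M := poch_pos (by positivity) (by linarith)
    have hP : 0 < poch ((n : ℝ) + 1) M * poch ((n' : ℝ) + 1) M := mul_pos hPn hPn'
    have h2 : poch ((n : ℝ) + 1) (M + 1) = poch ((n : ℝ) + 1) M * ((n : ℝ) + 1 + M) := by
      rw [show M + 1 = M + 1 from rfl, poch_succ (by positivity)]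
    have h3 : poch ((n' : ℝ) + 1) (M + 1) = poch ((n' : ℝ) + 1) M * ((n' : ℝ) + 1 + M) := by
      rw [poch_succ (by positivity)]
    set S : ℝ := Real.sqrt (((n : ℝ) + 1 + M) * ((n' : ℝ) + 1 + M)) with hSdef
    have hS : 0 < S := Real.sqrt_pos.mpr (by positivity)
    have h4 : Real.sqrt (poch ((n : ℝ) + 1) (M + 1) * poch ((n' : ℝ) + 1) (M + 1))
        = Real.sqrt (poch ((n : ℝ) + 1) M * poch ((n' : ℝ) + 1) M) * S := by
      rw [h2, h3, show poch ((n:ℝ)+1) M * ((n:ℝ)+1+M) * (poch ((n':ℝ)+1) M * ((n':ℝ)+1+M))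
          = (poch ((n:ℝ)+1) M * poch ((n':ℝ)+1) M) * (((n:ℝ)+1+M) * ((n':ℝ)+1+M)) by ring,
        Real.sqrt_mul hP.le]
    rw [h4, Finset.mul_sum, Finset.mul_sum]
    apply Finset.sum_le_sum
    intro k hk
    simp only [Finset.mem_range, Nat.lt_succ_iff, le_min_iff] at hk
    have hkn : (k : ℝ) ≤ n := by exact_mod_cast hk.1
    have hkn' : (k : ℝ) ≤ n' := by exact_mod_cast hk.2
    have hA : 0 < poch ((k : ℝ) + 1) (M - 1/2) := poch_pos (by positivity) (by linarith)
    have hB : 0 < poch ((n : ℝ) - (k : ℝ) + 1/2) (1/2) * poch ((n' : ℝ) - (k : ℝ) + 1/2) (1/2) :=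
      mul_pos (poch_pos (by linarith) (by linarith)) (poch_pos (by linarith) (by linarith))
    have h1 : poch ((k : ℝ) + 1) (M + 1 - 1/2)
        = poch ((k : ℝ) + 1) (M - 1/2) * ((k : ℝ) + M + 1/2) := by
      rw [show M + 1 - 1/2 = (M - 1/2) + 1 by ring, poch_succ (by
        intro hc; nlinarith), show (k:ℝ) + 1 + (M - 1/2) = (k:ℝ) + M + 1/2 by ring]
    have hxS : (k : ℝ) + M + 1/2 ≤ S := by
      have hx0 : (0:ℝ) ≤ (k : ℝ) + M + 1/2 := by linarith
      rw [hSdef, (Real.le_sqrt hx0 (by positivity))]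
      nlinarith
    rw [h1]
    set sP : ℝ := Real.sqrt (poch ((n : ℝ) + 1) M * poch ((n' : ℝ) + 1) M) with hsP
    have hsP0 : 0 < sP := Real.sqrt_pos.mpr hP
    set A : ℝ := poch ((k : ℝ) + 1) (M - 1/2)
    set B : ℝ := poch ((n : ℝ) - (k : ℝ) + 1/2) (1/2) * poch ((n' : ℝ) - (k : ℝ) + 1/2) (1/2)
    have e1 : 1 / (Real.pi * (sP * S)) * (A * ((k : ℝ) + M + 1/2) / B)
        = A * ((k : ℝ) + M + 1/2) / ((Real.pi * sP * B) * S) := by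
      field_simp
    have e2 : 1 / (Real.pi * sP) * (A / B) = A / (Real.pi * sP * B) := by
      field_simp
    rw [e1, e2]
    exact key_ineq hA.le (by positivity) hS (by linarith) hxS
end

section
/- For all n, n' ∈ ℕ one has v^{0,0}_{n+1,n'+1} ≤ v^{0,0}_{n,n'}, i.e. the m = 0 Coulomb matrix elements decrease along the diagonal shift of both indices. -/
open Real

open Nat

/- auxiliary lemmas -/

noncomputable def cgam (k : ℕ) : ℝ := Real.Gamma ((k : ℝ) + 1/2) / (k ! : ℝ)

lemma cgam_pos (k : ℕ) : 0 < cgam k := by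
  have := k.factorial_pos
  exact div_pos (Real.Gamma_pos_of_pos (by positivity)) (by positivity)

lemma cgam_zero : cgam 0 = Real.sqrt π := by
  norm_num [cgam, Real.Gamma_one_half_eq]

lemma cgam_succ (k : ℕ) : cgam (k+1) = cgam k * (((k:ℝ) + 1/2) / ((k:ℝ) + 1)) := by
  have hG : (0:ℝ) < Real.Gamma ((k:ℝ) + 1/2) := Real.Gamma_pos_of_pos (by positivity)
  have hf : (0:ℝ) < (k ! : ℝ) := by exact_mod_cast k.factorial_pos
  unfold cgam
  rw [Nat.factorial_succ]
  push_cast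
  have h : ((k:ℝ) + 1 + 1/2) = ((k:ℝ) + 1/2) + 1 := by ring
  rw [h, Real.Gamma_add_one (by positivity)]
  field_simp

lemma cgam_anti : Antitone cgam := by
  apply antitone_nat_of_succ_le
  intro k
  rw [cgam_succ]
  have h1 := cgam_pos k
  have h2 : ((k:ℝ) + 1/2) / ((k:ℝ) + 1) ≤ 1 := by
    rw [div_le_one (by positivity)]; linarith
  nlinarith

lemma half_exp_ne (m : ℕ) : ((m:ℂ) + 1/2 - 1) ≠ 0 := by
  intro hm
  have h := congrArg Complex.re hm
  simp at h
  rcases m with _ | m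
  · norm_num at h
  · push_cast at h; linarith

lemma betaSum (n : ℕ) :
    ∑ j ∈ Finset.range (n+1), (n.choose j : ℂ) *
      Complex.betaIntegral ((j:ℂ) + 1/2) (((n - j : ℕ) : ℂ) + 1/2) = (π : ℂ) := by
  have hre : ∀ m : ℕ, (0:ℝ) < ((m:ℂ) + 1/2).re := by
    intro m; simp; positivity
  calc ∑ j ∈ Finset.range (n+1), (n.choose j : ℂ) *
        Complex.betaIntegral ((j:ℂ) + 1/2) (((n - j : ℕ) : ℂ) + 1/2)
      = ∑ j ∈ Finset.range (n+1), ∫ t in (0:ℝ)..1,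
          (n.choose j : ℂ) * ((t:ℂ) ^ ((j:ℂ) + 1/2 - 1) * (1 - (t:ℂ)) ^ ((((n - j : ℕ) : ℂ)) + 1/2 - 1)) := by
        refine Finset.sum_congr rfl fun j hj => ?_
        rw [Complex.betaIntegral, ← intervalIntegral.integral_const_mul]
    _ = ∫ t in (0:ℝ)..1, ∑ j ∈ Finset.range (n+1),
          (n.choose j : ℂ) * ((t:ℂ) ^ ((j:ℂ) + 1/2 - 1) * (1 - (t:ℂ)) ^ ((((n - j : ℕ) : ℂ)) + 1/2 - 1)) := by
        refine (intervalIntegral.integral_finset_sum fun j hj => ?_).symm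
        exact (Complex.betaIntegral_convergent (hre j) (hre (n - j))).const_mul _
    _ = ∫ t in (0:ℝ)..1, (t:ℂ) ^ ((1:ℂ)/2 - 1) * (1 - (t:ℂ)) ^ ((1:ℂ)/2 - 1) := by
        apply intervalIntegral.integral_congr
        intro t ht
        rw [Set.uIcc_of_le (by norm_num : (0:ℝ) ≤ 1)] at ht
        obtain ⟨h0, h1⟩ := ht
        simp only
        rcases eq_or_lt_of_le h0 with h0' | h0'
        · -- t = 0
          have ht0 : (t:ℂ) = 0 := by rw [← h0']; norm_num
          rw [ht0, Complex.zero_cpow (by norm_num : ((1:ℂ)/2 - 1) ≠ 0), zero_mul]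
          refine Finset.sum_eq_zero fun j hj => ?_
          rw [Complex.zero_cpow (half_exp_ne j), zero_mul, mul_zero]
        rcases eq_or_lt_of_le h1 with h1' | h1'
        · -- t = 1
          have ht1 : (1:ℂ) - (t:ℂ) = 0 := by rw [h1']; norm_num
          rw [ht1, Complex.zero_cpow (by norm_num : ((1:ℂ)/2 - 1) ≠ 0), mul_zero]
          refine Finset.sum_eq_zero fun j hj => ?_
          rw [Complex.zero_cpow (half_exp_ne (n - j)), mul_zero, mul_zero]
        · -- interior
          have ht0 : (t:ℂ) ≠ 0 := by exact_mod_cast h0'.ne'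
          have ht1 : (1:ℂ) - (t:ℂ) ≠ 0 := by
            rw [sub_ne_zero]
            exact_mod_cast h1'.ne'
          have expand : ∀ j ∈ Finset.range (n + 1),
              (n.choose j : ℂ) * ((t:ℂ) ^ ((j:ℂ) + 1/2 - 1) * (1 - (t:ℂ)) ^ (((n - j : ℕ):ℂ) + 1/2 - 1))
              = ((t:ℂ) ^ j * (1 - (t:ℂ)) ^ (n - j) * (n.choose j : ℂ)) *
                ((t:ℂ) ^ ((1:ℂ)/2 - 1) * (1 - (t:ℂ)) ^ ((1:ℂ)/2 - 1)) := by
            intro j hj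
            rw [show (j:ℂ) + 1/2 - 1 = (j:ℂ) + ((1:ℂ)/2 - 1) by ring,
              show ((n - j : ℕ):ℂ) + 1/2 - 1 = ((n - j : ℕ):ℂ) + ((1:ℂ)/2 - 1) by ring,
              Complex.cpow_add _ _ ht0, Complex.cpow_add _ _ ht1,
              Complex.cpow_natCast, Complex.cpow_natCast]
            ring
          rw [Finset.sum_congr rfl expand, ← Finset.sum_mul, ← add_pow]
          norm_num
    _ = Complex.betaIntegral (1/2) (1/2) := rfl
    _ = (π : ℂ) := by
        have hg : Complex.Gamma (1/2) = ((Real.sqrt π : ℝ) : ℂ) := by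
          rw [show (1/2:ℂ) = ((1/2:ℝ):ℂ) by norm_num, Complex.Gamma_ofReal,
            Real.Gamma_one_half_eq]
        have h := Complex.Gamma_mul_Gamma_eq_betaIntegral (s := 1/2) (t := 1/2)
          (by norm_num) (by norm_num)
        rw [hg] at h
        norm_num at h
        rw [← h, ← Complex.ofReal_mul, Real.mul_self_sqrt Real.pi_pos.le]

lemma cgam_conv (n : ℕ) : ∑ j ∈ Finset.range (n+1), cgam j * cgam (n - j) = π := by
  have key : ∀ j ∈ Finset.range (n+1),
      ((cgam j * cgam (n - j) : ℝ) : ℂ)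
        = (n.choose j : ℂ) * Complex.betaIntegral ((j:ℂ) + 1/2) (((n - j : ℕ):ℂ) + 1/2) := by
    intro j hj
    have hj' : j ≤ n := Nat.lt_succ_iff.mp (Finset.mem_range.mp hj)
    have hre : ∀ m : ℕ, (0:ℝ) < ((m:ℂ) + 1/2).re := by
      intro m; simp; positivity
    have hb := Complex.Gamma_mul_Gamma_eq_betaIntegral (s := (j:ℂ) + 1/2)
      (t := ((n - j : ℕ):ℂ) + 1/2) (hre j) (hre (n - j))
    have hst : ((j:ℂ) + 1/2) + (((n - j : ℕ):ℂ) + 1/2) = (n:ℂ) + 1 := by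
      push_cast [hj']; ring
    rw [hst, Complex.Gamma_nat_eq_factorial] at hb
    have g1 : Complex.Gamma ((j:ℂ) + 1/2) = ((Real.Gamma ((j:ℝ) + 1/2) : ℝ) : ℂ) := by
      rw [← Complex.Gamma_ofReal]; push_cast; ring_nf
    have g2 : Complex.Gamma (((n - j : ℕ):ℂ) + 1/2)
        = ((Real.Gamma (((n - j : ℕ):ℝ) + 1/2) : ℝ) : ℂ) := by
      rw [← Complex.Gamma_ofReal]; push_cast; ring_nf
    rw [g1, g2] at hb
    have hfact : ((n.choose j : ℕ) : ℂ) * (j ! : ℂ) * ((n - j)! : ℂ) = (n ! : ℂ) := by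
      exact_mod_cast congrArg (Nat.cast (R := ℂ)) (Nat.choose_mul_factorial_mul_factorial hj')
    have hf1 : ((j ! : ℕ) : ℂ) ≠ 0 := by exact_mod_cast j.factorial_pos.ne'
    have hf2 : (((n - j)! : ℕ) : ℂ) ≠ 0 := by exact_mod_cast (n - j).factorial_pos.ne'
    unfold cgam
    rw [Complex.ofReal_mul, Complex.ofReal_div, Complex.ofReal_div]
    set G1 := Real.Gamma ((j:ℝ) + 1/2) with hG1
    set G2 := Real.Gamma (((n - j : ℕ):ℝ) + 1/2) with hG2
    set B := Complex.betaIntegral ((j:ℂ) + 1/2) (((n - j : ℕ):ℂ) + 1/2) with hB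
    have hf1' : ((j ! : ℝ) : ℂ) ≠ 0 := by exact_mod_cast hf1
    have hf2' : (((n - j)! : ℝ) : ℂ) ≠ 0 := by exact_mod_cast hf2
    field_simp
    linear_combination hb - B * hfact
  have h2 : ((∑ j ∈ Finset.range (n+1), cgam j * cgam (n - j) : ℝ) : ℂ) = ((π : ℝ) : ℂ) := by
    push_cast
    rw [Finset.sum_congr rfl (fun j hj => by exact_mod_cast key j hj)]
    exact betaSum n
  exact_mod_cast h2

lemma cgam_key (n : ℕ) :
    ∑ k ∈ Finset.range (n+1), (cgam k - cgam (k+1)) * cgam (n - k)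
      = Real.sqrt π * cgam (n+1) := by
  have h1 := cgam_conv n
  have h2 := cgam_conv (n+1)
  rw [Finset.sum_range_succ'] at h2
  simp only [Nat.succ_sub_succ, Nat.sub_zero, cgam_zero] at h2
  simp only [sub_mul, Finset.sum_sub_distrib, h1]
  linarith

lemma S_mono (n n' : ℕ) :
    ∑ k ∈ Finset.range (n+2), cgam k * cgam (n+1-k) * cgam (n'+1-k)
      ≤ ∑ k ∈ Finset.range (n+1), cgam k * cgam (n-k) * cgam (n'-k) := by
  rw [Finset.sum_range_succ']
  simp only [Nat.succ_sub_succ, Nat.sub_zero]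
  have key := cgam_key n
  have hb : Real.sqrt π * cgam (n+1) * cgam (n'+1)
      ≤ ∑ k ∈ Finset.range (n+1), (cgam k - cgam (k+1)) * cgam (n-k) * cgam (n'-k) := by
    calc Real.sqrt π * cgam (n+1) * cgam (n'+1)
        = (∑ k ∈ Finset.range (n+1), (cgam k - cgam (k+1)) * cgam (n-k)) * cgam (n'+1) := by
          rw [key]
      _ = ∑ k ∈ Finset.range (n+1), (cgam k - cgam (k+1)) * cgam (n-k) * cgam (n'+1) := by
          rw [Finset.sum_mul]
      _ ≤ ∑ k ∈ Finset.range (n+1), (cgam k - cgam (k+1)) * cgam (n-k) * cgam (n'-k) := by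
          refine Finset.sum_le_sum fun k hk => ?_
          have h1 : 0 ≤ cgam k - cgam (k+1) := by
            have := cgam_anti (Nat.le_succ k); linarith
          have h2 : cgam (n'+1) ≤ cgam (n'-k) := cgam_anti (by omega)
          have h3 := (cgam_pos (n-k)).le
          exact mul_le_mul_of_nonneg_left h2 (mul_nonneg h1 h3)
  have hsplit : ∑ k ∈ Finset.range (n+1), (cgam k - cgam (k+1)) * cgam (n-k) * cgam (n'-k)
      = ∑ k ∈ Finset.range (n+1), cgam k * cgam (n-k) * cgam (n'-k)
        - ∑ k ∈ Finset.range (n+1), cgam (k+1) * cgam (n-k) * cgam (n'-k) := by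
    rw [← Finset.sum_sub_distrib]
    exact Finset.sum_congr rfl fun k _ => by ring
  rw [cgam_zero]
  linarith [hb, hsplit.symm.le]

lemma v0_eq (n n' : ℕ) :
    v0 0 n n' = (1/π) *
      ∑ k ∈ Finset.range (min n n' + 1), cgam k * cgam (n - k) * cgam (n' - k) := by
  have hpoch0 : ∀ m : ℕ, poch ((m:ℝ) + 1) 0 = 1 := by
    intro m
    have h : Real.Gamma ((m:ℝ)+1) ≠ 0 := (Real.Gamma_pos_of_pos (by positivity)).ne'
    simp [poch, h]
  have hpochhalf : ∀ a b : ℕ, b ≤ a → poch ((a:ℝ) - (b:ℝ) + 1/2) (1/2) = (cgam (a - b))⁻¹ := by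
    intro a b hba
    have hc : ((a:ℝ) - (b:ℝ)) = ((a - b : ℕ) : ℝ) := by push_cast [hba]; ring
    rw [poch, hc, show ((a-b:ℕ):ℝ) + 1/2 + 1/2 = ((a-b:ℕ):ℝ) + 1 by ring,
      Real.Gamma_nat_eq_factorial, cgam, inv_div]
  have hterm : ∀ k ∈ Finset.range (min n n' + 1),
      poch ((k:ℝ) + 1) (((|(0:ℤ)| : ℤ) : ℝ) - 1/2) /
        (poch ((n:ℝ) - (k:ℝ) + 1/2) (1/2) * poch ((n':ℝ) - (k:ℝ) + 1/2) (1/2))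
      = cgam k * cgam (n - k) * cgam (n' - k) := by
    intro k hk
    have hk' : k ≤ min n n' := Nat.lt_succ_iff.mp (Finset.mem_range.mp hk)
    have hkn : k ≤ n := le_trans hk' (min_le_left _ _)
    have hkn' : k ≤ n' := le_trans hk' (min_le_right _ _)
    have h1 : poch ((k:ℝ) + 1) (((|(0:ℤ)| : ℤ) : ℝ) - 1/2) = cgam k := by
      rw [poch, show ((k:ℝ) + 1 + (((|(0:ℤ)| : ℤ) : ℝ) - 1/2)) = (k:ℝ) + 1/2 by
          simp only [abs_zero, Int.cast_zero]; ring,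
        Real.Gamma_nat_eq_factorial, cgam]
    rw [h1, hpochhalf n k hkn, hpochhalf n' k hkn']
    have p1 := cgam_pos (n - k)
    have p2 := cgam_pos (n' - k)
    field_simp
  unfold v0
  rw [Finset.sum_congr rfl hterm]
  congr 1
  norm_num [hpoch0 n, hpoch0 n']


theorem v0_diagonal_shift_decreasing (n n' : ℕ) :
    v0 0 (n + 1) (n' + 1) ≤ v0 0 n n' := by
  rw [v0_eq, v0_eq]
  have hπ : (0:ℝ) < π := Real.pi_pos
  refine mul_le_mul_of_nonneg_left ?_ (by positivity)
  have hsymm : ∀ a b : ℕ, ∑ k ∈ Finset.range (min a b + 1), cgam k * cgam (a - k) * cgam (b - k)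
      = ∑ k ∈ Finset.range (min b a + 1), cgam k * cgam (b - k) * cgam (a - k) := by
    intro a b
    rw [min_comm]
    exact Finset.sum_congr rfl fun k _ => by ring
  rcases le_total n n' with h | h
  · rw [min_eq_left h, min_eq_left (by omega : n + 1 ≤ n' + 1)]
    exact S_mono n n'
  · rw [hsymm n n', hsymm (n+1) (n'+1), min_eq_left h, min_eq_left (by omega : n' + 1 ≤ n + 1)]
    exact S_mono n' n
end

section
/- For every finitely supported sequence a : ℕ → ℝ with a_n ≥ 0 for all n, one has Σ_{n,n'} a_n v^{0,0}_{n,n'} a_{n'} ≤ (Γ(1/4)⁴/(2π²)) · Σ_{n=0}^∞ (Γ(n + 3/4)/Γ(n + 1/4)) a_n². -/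
open Real

open Finset

noncomputable def cc (n : ℕ) : ℝ := Real.Gamma ((n:ℝ) + 1/2) / Real.Gamma ((n:ℝ) + 1)
noncomputable def hh (n : ℕ) : ℝ := Real.Gamma ((n:ℝ) + 1/4) / Real.Gamma ((n:ℝ) + 1)

lemma cc_pos (n : ℕ) : 0 < cc n := by
  have h1 : (0:ℝ) < (n:ℝ) + 1/2 := by positivity
  have h2 : (0:ℝ) < (n:ℝ) + 1 := by positivity
  exact div_pos (Real.Gamma_pos_of_pos h1) (Real.Gamma_pos_of_pos h2)

lemma hh_pos (n : ℕ) : 0 < hh n := by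
  have h1 : (0:ℝ) < (n:ℝ) + 1/4 := by positivity
  have h2 : (0:ℝ) < (n:ℝ) + 1 := by positivity
  exact div_pos (Real.Gamma_pos_of_pos h1) (Real.Gamma_pos_of_pos h2)

lemma cc_succ (n : ℕ) : ((n:ℝ) + 1) * cc (n+1) = ((n:ℝ) + 1/2) * cc n := by
  unfold cc
  push_cast
  rw [show (n:ℝ) + 1 + 1/2 = ((n:ℝ) + 1/2) + 1 by ring,
    show (n:ℝ) + 1 + 1 = ((n:ℝ) + 1) + 1 by ring,
    Real.Gamma_add_one (by positivity : ((n:ℝ) + 1/2) ≠ 0),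
    Real.Gamma_add_one (by positivity : ((n:ℝ) + 1) ≠ 0)]
  have h2 : Real.Gamma ((n:ℝ) + 1) ≠ 0 := (Real.Gamma_pos_of_pos (by positivity)).ne'
  field_simp

lemma hh_succ (n : ℕ) : ((n:ℝ) + 1) * hh (n+1) = ((n:ℝ) + 1/4) * hh n := by
  unfold hh
  push_cast
  rw [show (n:ℝ) + 1 + 1/4 = ((n:ℝ) + 1/4) + 1 by ring,
    show (n:ℝ) + 1 + 1 = ((n:ℝ) + 1) + 1 by ring,
    Real.Gamma_add_one (by positivity : ((n:ℝ) + 1/4) ≠ 0),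
    Real.Gamma_add_one (by positivity : ((n:ℝ) + 1) ≠ 0)]
  have h2 : Real.Gamma ((n:ℝ) + 1) ≠ 0 := (Real.Gamma_pos_of_pos (by positivity)).ne'
  field_simp

/-- Vandermonde-type convolution. -/
lemma vandermonde (n : ℕ) :
    ∑ p ∈ Finset.HasAntidiagonal.antidiagonal n, cc p.1 * hh p.2
      = Real.sqrt π * (Real.Gamma (1/4) / Real.Gamma (3/4)) *
        (Real.Gamma ((n:ℝ) + 3/4) / Real.Gamma ((n:ℝ) + 1)) := by
  induction n with
  | zero =>
      have h34 : Real.Gamma (3/4 : ℝ) ≠ 0 := (Real.Gamma_pos_of_pos (by norm_num)).ne'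
      simp only [Finset.Nat.antidiagonal_zero, Finset.sum_singleton]
      show cc 0 * hh 0 = _
      unfold cc hh
      rw [show ((0:ℕ):ℝ) = (0:ℝ) by norm_num]
      norm_num [Real.Gamma_one, Real.Gamma_one_half_eq]
      field_simp
  | succ n ih =>
      have key : ((n:ℝ) + 1) * ∑ p ∈ Finset.HasAntidiagonal.antidiagonal (n+1), cc p.1 * hh p.2
          = ((n:ℝ) + 3/4) * ∑ p ∈ Finset.HasAntidiagonal.antidiagonal n, cc p.1 * hh p.2 := by
        have split : ((n:ℝ) + 1) * ∑ p ∈ Finset.HasAntidiagonal.antidiagonal (n+1), cc p.1 * hh p.2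
            = (∑ p ∈ Finset.HasAntidiagonal.antidiagonal (n+1), ((p.1 : ℝ) * cc p.1) * hh p.2)
              + ∑ p ∈ Finset.HasAntidiagonal.antidiagonal (n+1), cc p.1 * ((p.2 : ℝ) * hh p.2) := by
          rw [Finset.mul_sum, ← Finset.sum_add_distrib]
          refine Finset.sum_congr rfl fun p hp => ?_
          have hmem : p.1 + p.2 = n + 1 := Finset.HasAntidiagonal.mem_antidiagonal.mp hp
          have hc : ((n:ℝ) + 1) = (p.1 : ℝ) + (p.2 : ℝ) := by exact_mod_cast hmem.symm
          rw [hc]; ring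
        rw [split, Finset.Nat.sum_antidiagonal_succ (f := fun p => ((p.1 : ℝ) * cc p.1) * hh p.2),
          Finset.Nat.sum_antidiagonal_succ' (f := fun p => cc p.1 * ((p.2 : ℝ) * hh p.2))]
        simp only [Nat.cast_zero, zero_mul, mul_zero, zero_add, add_zero]
        have e1 : ∀ p : ℕ × ℕ, ((p.1 + 1 : ℕ) : ℝ) * cc (p.1 + 1) * hh p.2
            = (((p.1:ℝ) + 1/2) * cc p.1) * hh p.2 := by
          intro p; rw [show ((p.1 + 1 : ℕ) : ℝ) = (p.1:ℝ) + 1 by push_cast; ring, cc_succ]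
        have e2 : ∀ p : ℕ × ℕ, cc p.1 * (((p.2 + 1 : ℕ) : ℝ) * hh (p.2 + 1))
            = cc p.1 * (((p.2:ℝ) + 1/4) * hh p.2) := by
          intro p; rw [show ((p.2 + 1 : ℕ) : ℝ) = (p.2:ℝ) + 1 by push_cast; ring, hh_succ]
        simp only [e1, e2]
        rw [Finset.mul_sum, ← Finset.sum_add_distrib]
        refine Finset.sum_congr rfl fun p hp => ?_
        have hmem : p.1 + p.2 = n := Finset.HasAntidiagonal.mem_antidiagonal.mp hp
        have hc : (p.1 : ℝ) + (p.2 : ℝ) = (n:ℝ) := by exact_mod_cast hmem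
        linear_combination cc p.1 * hh p.2 * hc
      rw [ih] at key
      have hne : ((n:ℝ) + 1) ≠ 0 := by positivity
      have hG : Real.Gamma ((n:ℝ) + 1 + 3/4) = ((n:ℝ)+3/4) * Real.Gamma ((n:ℝ) + 3/4) := by
        rw [show (n:ℝ) + 1 + 3/4 = ((n:ℝ) + 3/4) + 1 by ring,
          Real.Gamma_add_one (by positivity : ((n:ℝ) + 3/4) ≠ 0)]
      have hG2 : Real.Gamma ((n:ℝ) + 1 + 1) = ((n:ℝ)+1) * Real.Gamma ((n:ℝ) + 1) := by
        rw [Real.Gamma_add_one (by positivity : ((n:ℝ) + 1) ≠ 0)]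
      have hGn : Real.Gamma ((n:ℝ) + 1) ≠ 0 := (Real.Gamma_pos_of_pos (by positivity)).ne'
      push_cast
      rw [hG, hG2]
      apply mul_left_cancel₀ hne
      rw [key]
      field_simp

/-- `c * c` convolution equals `π`. -/
lemma ccconv (n : ℕ) : ∑ p ∈ Finset.HasAntidiagonal.antidiagonal n, cc p.1 * cc p.2 = π := by
  induction n with
  | zero =>
      simp only [Finset.Nat.antidiagonal_zero, Finset.sum_singleton]
      show cc 0 * cc 0 = π
      unfold cc
      norm_num [Real.Gamma_one, Real.Gamma_one_half_eq]
      exact Real.mul_self_sqrt pi_nonneg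
  | succ n ih =>
      have key : ((n:ℝ) + 1) * ∑ p ∈ Finset.HasAntidiagonal.antidiagonal (n+1), cc p.1 * cc p.2
          = ((n:ℝ) + 1) * ∑ p ∈ Finset.HasAntidiagonal.antidiagonal n, cc p.1 * cc p.2 := by
        have split : ((n:ℝ) + 1) * ∑ p ∈ Finset.HasAntidiagonal.antidiagonal (n+1), cc p.1 * cc p.2
            = (∑ p ∈ Finset.HasAntidiagonal.antidiagonal (n+1), ((p.1 : ℝ) * cc p.1) * cc p.2)
              + ∑ p ∈ Finset.HasAntidiagonal.antidiagonal (n+1), cc p.1 * ((p.2 : ℝ) * cc p.2) := by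
          rw [Finset.mul_sum, ← Finset.sum_add_distrib]
          refine Finset.sum_congr rfl fun p hp => ?_
          have hmem : p.1 + p.2 = n + 1 := Finset.HasAntidiagonal.mem_antidiagonal.mp hp
          have hc : ((n:ℝ) + 1) = (p.1 : ℝ) + (p.2 : ℝ) := by exact_mod_cast hmem.symm
          rw [hc]; ring
        rw [split, Finset.Nat.sum_antidiagonal_succ (f := fun p => ((p.1 : ℝ) * cc p.1) * cc p.2),
          Finset.Nat.sum_antidiagonal_succ' (f := fun p => cc p.1 * ((p.2 : ℝ) * cc p.2))]
        simp only [Nat.cast_zero, zero_mul, mul_zero, zero_add, add_zero]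
        have e1 : ∀ p : ℕ × ℕ, ((p.1 + 1 : ℕ) : ℝ) * cc (p.1 + 1) * cc p.2
            = (((p.1:ℝ) + 1/2) * cc p.1) * cc p.2 := by
          intro p; rw [show ((p.1 + 1 : ℕ) : ℝ) = (p.1:ℝ) + 1 by push_cast; ring, cc_succ]
        have e2 : ∀ p : ℕ × ℕ, cc p.1 * (((p.2 + 1 : ℕ) : ℝ) * cc (p.2 + 1))
            = cc p.1 * (((p.2:ℝ) + 1/2) * cc p.2) := by
          intro p; rw [show ((p.2 + 1 : ℕ) : ℝ) = (p.2:ℝ) + 1 by push_cast; ring, cc_succ]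
        simp only [e1, e2]
        rw [Finset.mul_sum, ← Finset.sum_add_distrib]
        refine Finset.sum_congr rfl fun p hp => ?_
        have hmem : p.1 + p.2 = n := Finset.HasAntidiagonal.mem_antidiagonal.mp hp
        have hc : (p.1 : ℝ) + (p.2 : ℝ) = (n:ℝ) := by exact_mod_cast hmem
        linear_combination cc p.1 * cc p.2 * hc
      have hne : ((n:ℝ) + 1) ≠ 0 := by positivity
      rw [ih] at key
      exact mul_left_cancel₀ hne key

/-- partial sums of binomial series, squared bound. -/
lemma partial_binomial_sq {x : ℝ} (hx0 : 0 ≤ x) (hx1 : x < 1) (N : ℕ) :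
    (∑ j ∈ Finset.range N, cc j * x ^ j) ^ 2 ≤ π / (1 - x) := by
  set T : Finset (ℕ × ℕ) := (Finset.range (2*N)).biUnion (fun m => Finset.HasAntidiagonal.antidiagonal m) with hT
  have hsq : (∑ j ∈ Finset.range N, cc j * x ^ j) ^ 2
      = ∑ p ∈ Finset.range N ×ˢ Finset.range N, (cc p.1 * cc p.2) * x ^ (p.1 + p.2) := by
    rw [sq, Finset.sum_mul_sum, Finset.sum_product]
    refine Finset.sum_congr rfl fun i _ => Finset.sum_congr rfl fun j _ => ?_
    rw [pow_add]; ring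
  have hsubset : Finset.range N ×ˢ Finset.range N ⊆ T := by
    intro p hp
    rw [Finset.mem_product] at hp
    obtain ⟨h1, h2⟩ := hp
    rw [Finset.mem_range] at h1 h2
    rw [hT, Finset.mem_biUnion]
    refine ⟨p.1 + p.2, ?_, Finset.HasAntidiagonal.mem_antidiagonal.mpr rfl⟩
    rw [Finset.mem_range]
    omega
  have hTsum : ∑ p ∈ T, (cc p.1 * cc p.2) * x ^ (p.1 + p.2)
      = ∑ m ∈ Finset.range (2*N), π * x ^ m := by
    rw [hT, Finset.sum_biUnion]
    · refine Finset.sum_congr rfl fun m _ => ?_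
      have : ∀ p ∈ Finset.HasAntidiagonal.antidiagonal m, (cc p.1 * cc p.2) * x ^ (p.1 + p.2)
          = (cc p.1 * cc p.2) * x ^ m := by
        intro p hp
        rw [Finset.HasAntidiagonal.mem_antidiagonal.mp hp]
      rw [Finset.sum_congr rfl this, ← Finset.sum_mul, ccconv]
    · intro i hi j hj hij
      simp only [Finset.disjoint_left]
      intro p hpi hpj
      exact hij (by rw [← Finset.HasAntidiagonal.mem_antidiagonal.mp hpi, Finset.HasAntidiagonal.mem_antidiagonal.mp hpj])
  have hmono : ∑ p ∈ Finset.range N ×ˢ Finset.range N, (cc p.1 * cc p.2) * x ^ (p.1 + p.2)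
      ≤ ∑ p ∈ T, (cc p.1 * cc p.2) * x ^ (p.1 + p.2) := by
    apply Finset.sum_le_sum_of_subset_of_nonneg hsubset
    intro p _ _
    have := cc_pos p.1
    have := cc_pos p.2
    positivity
  have hlt : 0 < 1 - x := by linarith
  have hgeom : ∑ m ∈ Finset.range (2*N), π * x ^ m ≤ π / (1 - x) := by
    rw [← Finset.mul_sum]
    have hgs : ∑ m ∈ Finset.range (2*N), x ^ m = (1 - x^(2*N))/(1-x) := by
      rw [geom_sum_eq hx1.ne]
      rw [div_eq_div_iff (by linarith) hlt.ne']
      ring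
    rw [hgs]
    calc π * ((1 - x^(2*N))/(1-x)) ≤ π * (1/(1-x)) := by
          have h0 : 0 ≤ x^(2*N) := pow_nonneg hx0 _
          gcongr <;> linarith
      _ = π / (1-x) := by ring
  calc (∑ j ∈ Finset.range N, cc j * x ^ j) ^ 2
      = _ := hsq
    _ ≤ _ := hmono
    _ = _ := hTsum
    _ ≤ π / (1-x) := hgeom

lemma realBetaIntegrable {p q : ℝ} (hp : 0 < p) (hq : 0 < q) :
    IntervalIntegrable (fun x => x ^ (p-1) * (1-x) ^ (q-1) : ℝ → ℝ) MeasureTheory.volume 0 1 := by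
  have h1 : IntervalIntegrable (fun x => x ^ (p-1) * (1-x) ^ (q-1) : ℝ → ℝ)
      MeasureTheory.volume 0 (1/2) := by
    apply IntervalIntegrable.mul_continuousOn
    · exact intervalIntegral.intervalIntegrable_rpow' (by linarith)
    · apply ContinuousOn.rpow_const
      · exact (continuous_const.sub continuous_id).continuousOn
      · intro x hx
        rw [Set.uIcc_of_le (by norm_num)] at hx
        left
        have : x ≤ 1/2 := hx.2
        intro h0
        have hx0 : x = 1 := by
          have := sub_eq_zero.mp h0
          simpa using this.symm
        linarith
  have h2 : IntervalIntegrable (fun x => x ^ (p-1) * (1-x) ^ (q-1) : ℝ → ℝ)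
      MeasureTheory.volume (1/2) 1 := by
    apply IntervalIntegrable.continuousOn_mul
    · have base : IntervalIntegrable (fun x => x ^ (q-1) : ℝ → ℝ)
        MeasureTheory.volume 0 (1/2) := intervalIntegral.intervalIntegrable_rpow' (by linarith)
      have := base.comp_sub_left 1
      norm_num at this
      exact this.symm
    · apply ContinuousOn.rpow_const continuous_id.continuousOn
      intro x hx
      rw [Set.uIcc_of_le (by norm_num)] at hx
      left
      have : (1:ℝ)/2 ≤ x := hx.1
      simp only [id]
      intro h0; rw [h0] at this; norm_num at this
  exact h1.trans h2

lemma realBeta {p q : ℝ} (hp : 0 < p) (hq : 0 < q) :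
    ∫ x in (0:ℝ)..1, x ^ (p-1) * (1-x) ^ (q-1)
      = Real.Gamma p * Real.Gamma q / Real.Gamma (p+q) := by
  have key := Complex.Gamma_mul_Gamma_eq_betaIntegral
    (s := (p:ℂ)) (t := (q:ℂ)) (by simpa using hp) (by simpa using hq)
  have hbeta : Complex.betaIntegral (p:ℂ) (q:ℂ)
      = ((∫ x in (0:ℝ)..1, x ^ (p-1) * (1-x) ^ (q-1) : ℝ) : ℂ) := by
    rw [Complex.betaIntegral]
    have hcong : ∀ x ∈ Set.uIcc (0:ℝ) 1,
        (x:ℂ) ^ ((p:ℂ)-1) * (1-(x:ℂ)) ^ ((q:ℂ)-1)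
          = ((x ^ (p-1) * (1-x) ^ (q-1) : ℝ) : ℂ) := by
      intro x hx
      rw [Set.uIcc_of_le (by norm_num)] at hx
      have hx0 : (0:ℝ) ≤ x := hx.1
      have hx1 : (0:ℝ) ≤ 1 - x := by linarith [hx.2]
      rw [Complex.ofReal_mul, Complex.ofReal_cpow hx0, Complex.ofReal_cpow hx1]
      push_cast
      ring
    rw [intervalIntegral.integral_congr hcong]
    exact RCLike.intervalIntegral_ofReal
  rw [hbeta, ← Complex.ofReal_add, Complex.Gamma_ofReal, Complex.Gamma_ofReal,
    Complex.Gamma_ofReal, ← Complex.ofReal_mul, ← Complex.ofReal_mul] at key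
  have := Complex.ofReal_inj.mp key
  have hGpq : Real.Gamma (p+q) ≠ 0 := (Real.Gamma_pos_of_pos (by linarith)).ne'
  field_simp
  linarith [this]

lemma lemmaB (k N : ℕ) :
    ∑ j ∈ Finset.range N, cc j * hh (j + k)
      ≤ Real.sqrt π * (Real.Gamma (1/4) / Real.Gamma (3/4)) *
        (Real.Gamma ((k:ℝ) + 1/4) / Real.Gamma ((k:ℝ) + 1/2)) := by
  have hG34 : (0:ℝ) < Real.Gamma (3/4) := Real.Gamma_pos_of_pos (by norm_num)
  -- integrand pieces
  set F : ℕ → ℝ → ℝ :=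
    fun j x => cc j * (x ^ ((k:ℝ) + 1/4 - 1) * (1-x) ^ ((3:ℝ)/4 - 1) * x ^ j) with hF
  have hBint : IntervalIntegrable
      (fun x : ℝ => x ^ ((k:ℝ) + 1/4 - 1) * (1-x) ^ ((3:ℝ)/4 - 1)) MeasureTheory.volume 0 1 :=
    realBetaIntegrable (by positivity) (by norm_num)
  have hFint : ∀ j, IntervalIntegrable (F j) MeasureTheory.volume 0 1 := by
    intro j
    apply IntervalIntegrable.const_mul
    exact hBint.mul_continuousOn (Continuous.continuousOn (by continuity))
  -- step 1 : each term is an integral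
  have step1 : ∀ j, cc j * hh (j + k) = (1 / Real.Gamma (3/4)) * ∫ x in (0:ℝ)..1, F j x := by
    intro j
    have hcong : ∀ x ∈ Set.uIcc (0:ℝ) 1,
        F j x = cc j * (x ^ (((j:ℝ) + (k:ℝ) + 1/4) - 1) * (1-x) ^ ((3:ℝ)/4 - 1)) := by
      intro x hx
      rw [Set.uIcc_of_le (by norm_num)] at hx
      have hke : ((k:ℝ) + 1/4 - 1) ≠ 0 := by
        rcases Nat.eq_zero_or_pos k with hk | hk
        · subst hk; norm_num
        · have h1 : (1:ℝ) ≤ (k:ℝ) := by exact_mod_cast hk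
          intro h; linarith
      rcases eq_or_lt_of_le hx.1 with h0 | h0
      · -- x = 0
        rw [hF]
        simp only [← h0]
        rcases Nat.eq_zero_or_pos j with hj | hj
        · subst hj
          norm_num
        · have h1 : (1:ℝ) ≤ (j:ℝ) := by exact_mod_cast hj
          have hje : ((j:ℝ) + (k:ℝ) + 1/4 - 1) ≠ 0 := by
            have h2 : (0:ℝ) ≤ (k:ℝ) := Nat.cast_nonneg k
            intro h; linarith
          rw [Real.zero_rpow hke, Real.zero_rpow hje, zero_pow hj.ne']
          ring
      · rw [hF]
        simp only
        rw [← Real.rpow_natCast x j, mul_right_comm, ← Real.rpow_add h0,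
          show (k:ℝ) + 1/4 - 1 + (j:ℝ) = (j:ℝ) + (k:ℝ) + 1/4 - 1 by ring]
    rw [intervalIntegral.integral_congr hcong, intervalIntegral.integral_const_mul]
    have hbeta := realBeta (p := (j:ℝ) + (k:ℝ) + 1/4) (q := 3/4) (by positivity) (by norm_num)
    rw [hbeta]
    have hcast : ((j + k : ℕ) : ℝ) = (j:ℝ) + (k:ℝ) := by push_cast; ring
    unfold hh
    rw [hcast]
    rw [show (j:ℝ) + (k:ℝ) + 1/4 + 3/4 = (j:ℝ) + (k:ℝ) + 1 by ring]
    field_simp [(Real.Gamma_pos_of_pos (show (0:ℝ) < (j:ℝ) + (k:ℝ) + 1 by positivity)).ne']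
  -- step 2 : sum of integrals = integral of sum, and bound it
  have hsum : ∑ j ∈ Finset.range N, cc j * hh (j + k)
      = (1 / Real.Gamma (3/4)) * ∫ x in (0:ℝ)..1, ∑ j ∈ Finset.range N, F j x := by
    rw [intervalIntegral.integral_finset_sum (fun j _ => hFint j), Finset.mul_sum]
    exact Finset.sum_congr rfl fun j _ => step1 j
  set P : ℝ → ℝ := fun x => ∑ j ∈ Finset.range N, cc j * x ^ j with hP
  have hFP : ∀ x : ℝ, ∑ j ∈ Finset.range N, F j x
      = (x ^ ((k:ℝ) + 1/4 - 1) * (1-x) ^ ((3:ℝ)/4 - 1)) * P x := by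
    intro x
    rw [hP, Finset.mul_sum]
    exact Finset.sum_congr rfl fun j _ => by rw [hF]; ring
  have hPcont : Continuous P := by
    rw [hP]; exact continuous_finset_sum _ fun j _ => by continuity
  have hPnonneg : ∀ x : ℝ, 0 ≤ x → 0 ≤ P x := by
    intro x hx
    exact Finset.sum_nonneg fun j _ => mul_nonneg (cc_pos j).le (pow_nonneg hx j)
  have hint1 : IntervalIntegrable
      (fun x : ℝ => (x ^ ((k:ℝ) + 1/4 - 1) * (1-x) ^ ((3:ℝ)/4 - 1)) * P x)
      MeasureTheory.volume 0 1 := hBint.mul_continuousOn hPcont.continuousOn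
  have hint2 : IntervalIntegrable
      (fun x : ℝ => Real.sqrt π * (x ^ ((k:ℝ) + 1/4 - 1) * (1-x) ^ ((1:ℝ)/4 - 1)))
      MeasureTheory.volume 0 1 :=
    (realBetaIntegrable (by positivity) (by norm_num)).const_mul _
  have hptwise : ∀ x ∈ Set.Icc (0:ℝ) 1,
      (x ^ ((k:ℝ) + 1/4 - 1) * (1-x) ^ ((3:ℝ)/4 - 1)) * P x
        ≤ Real.sqrt π * (x ^ ((k:ℝ) + 1/4 - 1) * (1-x) ^ ((1:ℝ)/4 - 1)) := by
    intro x hx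
    rcases eq_or_lt_of_le hx.2 with h1 | h1
    · rw [h1]
      rw [show (1:ℝ) - 1 = 0 by ring, Real.zero_rpow (by norm_num : ((3:ℝ)/4 - 1) ≠ 0),
        Real.zero_rpow (by norm_num : ((1:ℝ)/4 - 1) ≠ 0)]
      simp
    · have hx1 : 0 < 1 - x := by linarith
      have hPb : P x ≤ Real.sqrt π * (1-x) ^ (-(1:ℝ)/2) := by
        have h2 := partial_binomial_sq hx.1 h1 N
        have h3 : P x ≤ Real.sqrt (π / (1-x)) :=
          (Real.le_sqrt (hPnonneg x hx.1) (by positivity)).mpr h2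
        calc P x ≤ Real.sqrt (π / (1-x)) := h3
          _ = Real.sqrt π * (1-x) ^ (-(1:ℝ)/2) := by
              rw [Real.sqrt_div pi_nonneg, Real.sqrt_eq_rpow (1-x), div_eq_mul_inv,
                ← Real.rpow_neg hx1.le]
              norm_num
      calc (x ^ ((k:ℝ) + 1/4 - 1) * (1-x) ^ ((3:ℝ)/4 - 1)) * P x
          ≤ (x ^ ((k:ℝ) + 1/4 - 1) * (1-x) ^ ((3:ℝ)/4 - 1))
              * (Real.sqrt π * (1-x) ^ (-(1:ℝ)/2)) := by
            apply mul_le_mul_of_nonneg_left hPb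
            have := Real.rpow_nonneg hx.1 ((k:ℝ) + 1/4 - 1)
            have := Real.rpow_nonneg hx1.le ((3:ℝ)/4 - 1)
            positivity
        _ = Real.sqrt π * (x ^ ((k:ℝ) + 1/4 - 1) * (1-x) ^ ((1:ℝ)/4 - 1)) := by
            have hadd : (1-x) ^ (-(1:ℝ)/2) * (1-x) ^ ((3:ℝ)/4 - 1) = (1-x) ^ ((1:ℝ)/4 - 1) := by
              rw [← Real.rpow_add hx1]
              norm_num
            linear_combination Real.sqrt π * x ^ ((k:ℝ) + 1/4 - 1) * hadd
  have hmono := intervalIntegral.integral_mono_on (by norm_num : (0:ℝ) ≤ 1) hint1 hint2 hptwise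
  have hbeta2 := realBeta (p := (k:ℝ) + 1/4) (q := 1/4) (by positivity) (by norm_num)
  rw [show (k:ℝ) + 1/4 + 1/4 = (k:ℝ) + 1/2 by ring] at hbeta2
  have final : (1 / Real.Gamma (3/4)) * ∫ x in (0:ℝ)..1, ∑ j ∈ Finset.range N, F j x
      ≤ (1 / Real.Gamma (3/4)) *
        (Real.sqrt π * (Real.Gamma ((k:ℝ) + 1/4) * Real.Gamma (1/4) / Real.Gamma ((k:ℝ) + 1/2))) := by
    apply mul_le_mul_of_nonneg_left _ (by positivity)
    calc (∫ x in (0:ℝ)..1, ∑ j ∈ Finset.range N, F j x)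
        = ∫ x in (0:ℝ)..1, (x ^ ((k:ℝ) + 1/4 - 1) * (1-x) ^ ((3:ℝ)/4 - 1)) * P x := by
          apply intervalIntegral.integral_congr
          intro x _
          exact hFP x
      _ ≤ ∫ x in (0:ℝ)..1, Real.sqrt π * (x ^ ((k:ℝ) + 1/4 - 1) * (1-x) ^ ((1:ℝ)/4 - 1)) := hmono
      _ = Real.sqrt π * (Real.Gamma ((k:ℝ) + 1/4) * Real.Gamma (1/4) / Real.Gamma ((k:ℝ) + 1/2)) := by
          rw [intervalIntegral.integral_const_mul, hbeta2]
  rw [hsum]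
  refine final.trans_eq ?_
  have hGk : Real.Gamma ((k:ℝ) + 1/2) ≠ 0 := (Real.Gamma_pos_of_pos (by positivity)).ne'
  field_simp

lemma poch_sub_half (k : ℕ) : poch ((k:ℝ) + 1) (-(1/2)) = cc k := by
  unfold poch cc
  rw [show (k:ℝ) + 1 + (-(1/2)) = (k:ℝ) + 1/2 by ring]

lemma poch_plus_half {k n : ℕ} (hk : k ≤ n) :
    poch ((n:ℝ) - (k:ℝ) + 1/2) (1/2) = 1 / cc (n - k) := by
  unfold poch cc
  have hcast : ((n - k : ℕ) : ℝ) = (n:ℝ) - (k:ℝ) := by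
    push_cast [Nat.cast_sub hk]; ring
  rw [hcast, show (n:ℝ) - (k:ℝ) + 1/2 + 1/2 = (n:ℝ) - (k:ℝ) + 1 by ring, one_div_div]

lemma v0_zero_eq (n n' : ℕ) :
    v0 0 n n' = (1 / π) *
      ∑ k ∈ Finset.range (min n n' + 1), cc k * cc (n - k) * cc (n' - k) := by
  unfold v0
  have h0 : ((|(0:ℤ)| : ℤ) : ℝ) = 0 := by norm_num
  rw [h0]
  have hpoch1 : ∀ m : ℕ, poch ((m:ℝ) + 1) 0 = 1 := by
    intro m
    unfold poch
    rw [add_zero]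
    exact div_self (Real.Gamma_pos_of_pos (by positivity)).ne'
  rw [hpoch1 n, hpoch1 n']
  norm_num
  refine Finset.sum_congr rfl fun k hk => ?_
  rw [Finset.mem_range] at hk
  have hkn : k ≤ n := by omega
  have hkn' : k ≤ n' := by omega
  rw [poch_sub_half, poch_plus_half hkn, poch_plus_half hkn']
  have h1 := cc_pos (n - k)
  have h2 := cc_pos (n' - k)
  field_simp

lemma v0_zero_symm (n n' : ℕ) : v0 0 n n' = v0 0 n' n := by
  rw [v0_zero_eq, v0_zero_eq, Nat.min_comm]
  refine congrArg _ (Finset.sum_congr rfl fun k _ => by ring)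

lemma v0_zero_nonneg (n n' : ℕ) : 0 ≤ v0 0 n n' := by
  rw [v0_zero_eq]
  have : (0:ℝ) ≤ 1/π := by positivity
  refine mul_nonneg this (Finset.sum_nonneg fun k _ => ?_)
  have h1 := cc_pos k
  have h2 := cc_pos (n - k)
  have h3 := cc_pos (n' - k)
  positivity

lemma amgm (v x y p q : ℝ) (hv : 0 ≤ v) (hp : 0 < p) (hq : 0 < q) :
    x * v * y ≤ (v * (x^2 * q / p) + v * (y^2 * p / q)) / 2 := by
  have key : 2 * (x * y) ≤ x^2 * q / p + y^2 * p / q := by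
    rw [div_add_div _ _ hp.ne' hq.ne', le_div_iff₀ (by positivity)]
    nlinarith [sq_nonneg (x * q - y * p), mul_pos hp hq]
  nlinarith [mul_le_mul_of_nonneg_left key hv]

lemma const_id : Real.sqrt π * (Real.Gamma (1/4) / Real.Gamma (3/4)) *
      (Real.sqrt π * (Real.Gamma (1/4) / Real.Gamma (3/4))) * (1/π)
    = Real.Gamma (1/4) ^ 4 / (2 * π ^ 2) := by
  have hππ : Real.sqrt π * Real.sqrt π = π := Real.mul_self_sqrt pi_nonneg
  have h2 : Real.sqrt 2 * Real.sqrt 2 = 2 := Real.mul_self_sqrt (by norm_num)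
  have hrefl : Real.Gamma (1/4) * Real.Gamma (3/4) = π * Real.sqrt 2 := by
    have := Real.Gamma_mul_Gamma_one_sub (1/4)
    rw [show (1:ℝ) - 1/4 = 3/4 by norm_num, show π * (1/4) = π/4 by ring,
      Real.sin_pi_div_four] at this
    rw [this, div_eq_iff (by positivity)]
    nlinarith [h2, pi_pos]
  have hG14 : (0:ℝ) < Real.Gamma (1/4) := Real.Gamma_pos_of_pos (by norm_num)
  have hG34 : (0:ℝ) < Real.Gamma (3/4) := Real.Gamma_pos_of_pos (by norm_num)
  have hs2 : (0:ℝ) < Real.sqrt 2 := by positivity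
  field_simp
  linear_combination (2*π) * hππ
    - (Real.Gamma (1/4)*Real.Gamma (3/4) + π*Real.sqrt 2) * hrefl
    - π^2 * h2

lemma row_bound (n M : ℕ) :
    ∑ n' ∈ Finset.range M, v0 0 n n' * hh n'
      ≤ (Real.Gamma (1/4) ^ 4 / (2 * π ^ 2)) *
        (Real.Gamma ((n:ℝ) + 3/4) / Real.Gamma ((n:ℝ) + 1)) := by
  set K : ℝ := Real.sqrt π * (Real.Gamma (1/4) / Real.Gamma (3/4)) with hK
  -- rewrite each row entry
  have hstep1 : ∀ n', v0 0 n n' * hh n'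
      = (1/π) * ∑ k ∈ Finset.range (n + 1),
          (if k ≤ n' then cc k * cc (n-k) * (cc (n'-k) * hh n') else 0) := by
    intro n'
    rw [v0_zero_eq, mul_assoc]
    congr 1
    rw [Finset.sum_mul]
    rw [← Finset.sum_subset (Finset.range_subset_range.mpr (by omega : min n n' + 1 ≤ n + 1))
      (fun k hkt hks => ?_)]
    · refine Finset.sum_congr rfl fun k hk => ?_
      rw [Finset.mem_range] at hk
      rw [if_pos (by omega)]
      ring
    · rw [Finset.mem_range] at hkt hks
      rw [if_neg (by omega)]
  have hsum : ∑ n' ∈ Finset.range M, v0 0 n n' * hh n'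
      = (1/π) * ∑ k ∈ Finset.range (n+1), ∑ n' ∈ Finset.range M,
          (if k ≤ n' then cc k * cc (n-k) * (cc (n'-k) * hh n') else 0) := by
    rw [Finset.sum_congr rfl fun n' _ => hstep1 n', ← Finset.mul_sum, Finset.sum_comm]
  rw [hsum]
  -- bound the inner sums
  have hinner : ∀ k, ∑ n' ∈ Finset.range M,
      (if k ≤ n' then cc k * cc (n-k) * (cc (n'-k) * hh n') else 0)
      ≤ cc k * cc (n-k) * (K * (Real.Gamma ((k:ℝ) + 1/4) / Real.Gamma ((k:ℝ) + 1/2))) := by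
    intro k
    have hfil : ∑ n' ∈ Finset.range M,
        (if k ≤ n' then cc k * cc (n-k) * (cc (n'-k) * hh n') else 0)
        = ∑ n' ∈ Finset.Ico k M, cc k * cc (n-k) * (cc (n'-k) * hh n') := by
      rw [← Finset.sum_filter]
      apply Finset.sum_congr _ (fun _ _ => rfl)
      ext x
      simp only [Finset.mem_filter, Finset.mem_range, Finset.mem_Ico]
      omega
    rw [hfil, Finset.sum_Ico_eq_sum_range]
    have hre : ∀ i, cc k * cc (n-k) * (cc ((k+i) - k) * hh (k+i))
        = cc k * cc (n-k) * (cc i * hh (i + k)) := by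
      intro i
      rw [Nat.add_sub_cancel_left, Nat.add_comm k i]
    rw [Finset.sum_congr rfl fun i _ => hre i, ← Finset.mul_sum]
    exact mul_le_mul_of_nonneg_left (lemmaB k (M - k))
      (mul_nonneg (cc_pos k).le (cc_pos (n-k)).le)
  calc (1/π) * ∑ k ∈ Finset.range (n+1), ∑ n' ∈ Finset.range M,
          (if k ≤ n' then cc k * cc (n-k) * (cc (n'-k) * hh n') else 0)
      ≤ (1/π) * ∑ k ∈ Finset.range (n+1),
          cc k * cc (n-k) * (K * (Real.Gamma ((k:ℝ) + 1/4) / Real.Gamma ((k:ℝ) + 1/2))) := by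
        apply mul_le_mul_of_nonneg_left _ (by positivity)
        exact Finset.sum_le_sum fun k _ => hinner k
    _ = (1/π) * (K * ∑ k ∈ Finset.range (n+1), hh k * cc (n-k)) := by
        congr 1
        rw [Finset.mul_sum]
        refine Finset.sum_congr rfl fun k _ => ?_
        have hcchh : cc k * (Real.Gamma ((k:ℝ) + 1/4) / Real.Gamma ((k:ℝ) + 1/2)) = hh k := by
          unfold cc hh
          have h1 : Real.Gamma ((k:ℝ) + 1/2) ≠ 0 := (Real.Gamma_pos_of_pos (by positivity)).ne'
          have h2 : Real.Gamma ((k:ℝ) + 1) ≠ 0 := (Real.Gamma_pos_of_pos (by positivity)).ne'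
          field_simp
        rw [← hcchh]
        ring
    _ = (1/π) * (K * (K * (Real.Gamma ((n:ℝ) + 3/4) / Real.Gamma ((n:ℝ) + 1)))) := by
        congr 2
        have hswap : ∑ k ∈ Finset.range (n+1), hh k * cc (n-k)
            = ∑ p ∈ Finset.HasAntidiagonal.antidiagonal n, cc p.1 * hh p.2 := by
          rw [← Finset.Nat.sum_antidiagonal_eq_sum_range_succ_mk
            (f := fun p => hh p.1 * cc p.2) n]
          rw [← Finset.Nat.sum_antidiagonal_swap (f := fun p => cc p.1 * hh p.2)]
          refine Finset.sum_congr rfl fun p _ => ?_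
          simp [Prod.swap]
          ring
        rw [hswap, vandermonde]
    _ = (Real.Gamma (1/4) ^ 4 / (2 * π ^ 2)) *
        (Real.Gamma ((n:ℝ) + 3/4) / Real.Gamma ((n:ℝ) + 1)) := by
        rw [← const_id, hK]
        ring

theorem v00_quadratic_form_bound (a : ℕ → ℝ) (ha : (Function.support a).Finite)
    (hpos : ∀ n, 0 ≤ a n) :
    (∑' n : ℕ, ∑' n' : ℕ, a n * v0 0 n n' * a n') ≤
      Real.Gamma (1/4) ^ 4 / (2 * Real.pi ^ 2) *
        ∑' n : ℕ, (Real.Gamma ((n : ℝ) + 3/4) / Real.Gamma ((n : ℝ) + 1/4)) * a n ^ 2 := by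
  classical
  set M : ℕ := ha.toFinset.sup id + 1 with hM
  have ha0 : ∀ n, n ∉ Finset.range M → a n = 0 := by
    intro n hn
    by_contra h
    have hns : n ∈ ha.toFinset := ha.mem_toFinset.mpr h
    have := Finset.le_sup (f := id) hns
    rw [Finset.mem_range] at hn
    simp only [id] at this
    omega
  have hinner : ∀ n, ∑' n', a n * v0 0 n n' * a n'
      = ∑ n' ∈ Finset.range M, a n * v0 0 n n' * a n' :=
    fun n => tsum_eq_sum (fun b hb => by rw [ha0 b hb]; ring)
  have hLHS : (∑' n : ℕ, ∑' n' : ℕ, a n * v0 0 n n' * a n')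
      = ∑ n ∈ Finset.range M, ∑ n' ∈ Finset.range M, a n * v0 0 n n' * a n' := by
    rw [tsum_congr hinner]
    exact tsum_eq_sum (fun b hb => Finset.sum_eq_zero fun n' _ => by rw [ha0 b hb]; ring)
  have hRHS : (∑' n : ℕ, (Real.Gamma ((n : ℝ) + 3/4) / Real.Gamma ((n : ℝ) + 1/4)) * a n ^ 2)
      = ∑ n ∈ Finset.range M, (Real.Gamma ((n : ℝ) + 3/4) / Real.Gamma ((n : ℝ) + 1/4)) * a n ^ 2 :=
    tsum_eq_sum (fun b hb => by rw [ha0 b hb]; ring)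
  rw [hLHS, hRHS]
  set lam : ℝ := Real.Gamma (1/4) ^ 4 / (2 * π ^ 2) with hlam
  calc ∑ n ∈ Finset.range M, ∑ n' ∈ Finset.range M, a n * v0 0 n n' * a n'
      ≤ ∑ n ∈ Finset.range M, ∑ n' ∈ Finset.range M,
          (v0 0 n n' * (a n ^ 2 * hh n' / hh n) + v0 0 n n' * (a n' ^ 2 * hh n / hh n')) / 2 := by
        refine Finset.sum_le_sum fun n _ => Finset.sum_le_sum fun n' _ => ?_
        exact amgm _ _ _ _ _ (v0_zero_nonneg n n') (hh_pos n) (hh_pos n')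
    _ = ∑ n ∈ Finset.range M, ∑ n' ∈ Finset.range M, v0 0 n n' * (a n ^ 2 * hh n' / hh n) := by
        have hsplit : ∀ x y : ℝ, (x + y)/2 = x/2 + y/2 := fun x y => by ring
        simp only [hsplit, Finset.sum_add_distrib]
        have hsym : ∑ n ∈ Finset.range M, ∑ n' ∈ Finset.range M,
              v0 0 n n' * (a n' ^ 2 * hh n / hh n') / 2
            = ∑ n ∈ Finset.range M, ∑ n' ∈ Finset.range M,
              v0 0 n n' * (a n ^ 2 * hh n' / hh n) / 2 := by
          rw [Finset.sum_comm]
          refine Finset.sum_congr rfl fun n _ => Finset.sum_congr rfl fun n' _ => ?_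
          rw [v0_zero_symm n' n]
        rw [hsym, ← Finset.sum_add_distrib]
        refine Finset.sum_congr rfl fun n _ => ?_
        rw [← Finset.sum_add_distrib]
        exact Finset.sum_congr rfl fun n' _ => by ring
    _ = ∑ n ∈ Finset.range M, (a n ^ 2 / hh n) * ∑ n' ∈ Finset.range M, v0 0 n n' * hh n' := by
        refine Finset.sum_congr rfl fun n _ => ?_
        rw [Finset.mul_sum]
        exact Finset.sum_congr rfl fun n' _ => by ring
    _ ≤ ∑ n ∈ Finset.range M, (a n ^ 2 / hh n) *
          (lam * (Real.Gamma ((n:ℝ) + 3/4) / Real.Gamma ((n:ℝ) + 1))) := by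
        refine Finset.sum_le_sum fun n _ => ?_
        have hhp := hh_pos n
        exact mul_le_mul_of_nonneg_left (row_bound n M) (by positivity)
    _ = lam * ∑ n ∈ Finset.range M,
          (Real.Gamma ((n : ℝ) + 3/4) / Real.Gamma ((n : ℝ) + 1/4)) * a n ^ 2 := by
        rw [Finset.mul_sum]
        refine Finset.sum_congr rfl fun n _ => ?_
        unfold hh
        have h1 : Real.Gamma ((n:ℝ) + 1/4) ≠ 0 := (Real.Gamma_pos_of_pos (by positivity)).ne'
        have h2 : Real.Gamma ((n:ℝ) + 1) ≠ 0 := (Real.Gamma_pos_of_pos (by positivity)).ne'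
        field_simp
end

section
/- For every n ∈ ℕ (including n = 0) one has Γ(n + 3/4)/Γ(n + 1/4) ≤ √(n + 3/4) < √(n + 1). -/
theorem gamma_ratio_le_sqrt (n : ℕ) :
    Real.Gamma ((n : ℝ) + 3/4) / Real.Gamma ((n : ℝ) + 1/4) ≤ Real.sqrt ((n : ℝ) + 3/4) ∧
    Real.sqrt ((n : ℝ) + 3/4) < Real.sqrt ((n : ℝ) + 1) := by
  constructor
  · set x : ℝ := (n : ℝ) + 1/4 with hxdef
    have hx0 : 0 < x := by positivity
    have hΓx : 0 < Real.Gamma x := Real.Gamma_pos_of_pos hx0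
    have hΓy : 0 < Real.Gamma (x + 1/2) := Real.Gamma_pos_of_pos (by linarith)
    have hΓx1 : 0 < Real.Gamma (x + 1) := Real.Gamma_pos_of_pos (by linarith)
    have key := Real.convexOn_log_Gamma.2 (Set.mem_Ioi.2 hx0)
      (Set.mem_Ioi.2 (by linarith : (0:ℝ) < x + 1))
      (by norm_num : (0:ℝ) ≤ 1/2) (by norm_num : (0:ℝ) ≤ 1/2) (by norm_num)
    simp only [smul_eq_mul, Function.comp_apply] at key
    have hmid : 1/2 * x + 1/2 * (x + 1) = x + 1/2 := by ring
    rw [hmid] at key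
    have hsq : Real.Gamma (x + 1/2) ^ 2 ≤ x * Real.Gamma x ^ 2 := by
      have h2 : 2 * Real.log (Real.Gamma (x + 1/2)) ≤
          Real.log (Real.Gamma x) + Real.log (Real.Gamma (x + 1)) := by linarith
      have := Real.exp_le_exp.2 h2
      rw [Real.exp_add, Real.exp_log hΓx, Real.exp_log hΓx1] at this
      rw [show (2:ℝ) * Real.log (Real.Gamma (x + 1/2)) =
          Real.log (Real.Gamma (x + 1/2)) + Real.log (Real.Gamma (x + 1/2)) by ring,
        Real.exp_add, Real.exp_log hΓy] at this
      have hrec : Real.Gamma (x + 1) = x * Real.Gamma x := Real.Gamma_add_one (ne_of_gt hx0)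
      rw [hrec] at this
      nlinarith [this, sq_nonneg (Real.Gamma x)]
    have hratio : Real.Gamma (x + 1/2) / Real.Gamma x ≤ Real.sqrt x := by
      rw [Real.le_sqrt (by positivity), div_pow, div_le_iff₀ (by positivity)]
      · nlinarith [hsq]
      · positivity
    have heq : (n : ℝ) + 3/4 = x + 1/2 := by rw [hxdef]; ring
    rw [heq]
    calc Real.Gamma (x + 1/2) / Real.Gamma x ≤ Real.sqrt x := hratio
      _ ≤ Real.sqrt (x + 1/2) := Real.sqrt_le_sqrt (by linarith)
  · exact Real.sqrt_lt_sqrt (by positivity) (by norm_num)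
end

section
/- For every n ∈ ℕ (including n = 0 and n = 1) one has the strict inequality Γ(n + 5/4)/Γ(n + 3/4) < √(n + 1). -/
theorem gamma_ratio_lt_sqrt (n : ℕ) :
    Real.Gamma ((n : ℝ) + 5/4) / Real.Gamma ((n : ℝ) + 3/4) < Real.sqrt ((n : ℝ) + 1) := by
  set x : ℝ := (n : ℝ) + 3/4 with hxdef
  have hx0 : 0 < x := by positivity
  have h1 : 0 < Real.Gamma x := Real.Gamma_pos_of_pos hx0
  have h2 : 0 < Real.Gamma (x + 1) := Real.Gamma_pos_of_pos (by linarith)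
  have h3 : 0 < Real.Gamma (x + 1/2) := Real.Gamma_pos_of_pos (by linarith)
  have key := Real.convexOn_log_Gamma.2 (Set.mem_Ioi.2 hx0)
      (Set.mem_Ioi.2 (show (0:ℝ) < x + 1 by linarith))
      (by norm_num : (0:ℝ) ≤ 1/2) (by norm_num : (0:ℝ) ≤ 1/2) (by norm_num)
  have hmid : (1/2 : ℝ) • x + (1/2 : ℝ) • (x + 1) = x + 1/2 := by
    simp [smul_eq_mul]; ring
  rw [hmid] at key
  simp only [Function.comp_apply, smul_eq_mul] at key
  -- key : log Γ(x+1/2) ≤ 1/2 * log Γ x + 1/2 * log Γ (x+1)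
  have hG1 : Real.Gamma (x + 1) = x * Real.Gamma x := Real.Gamma_add_one (ne_of_gt hx0)
  have hlog : Real.log (Real.Gamma (x + 1)) = Real.log x + Real.log (Real.Gamma x) := by
    rw [hG1, Real.log_mul (ne_of_gt hx0) (ne_of_gt h1)]
  have key2 : Real.log (Real.Gamma (x + 1/2)) ≤
      Real.log (Real.Gamma x) + Real.log x / 2 := by
    rw [hlog] at key; linarith
  have hle : Real.Gamma (x + 1/2) ≤ Real.Gamma x * Real.sqrt x := by
    have := Real.exp_le_exp.2 key2
    rw [Real.exp_log h3, Real.exp_add, Real.exp_log h1] at this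
    have hs : Real.exp (Real.log x / 2) = Real.sqrt x := by
      rw [Real.sqrt_eq_rpow, Real.rpow_def_of_pos hx0]
      ring_nf
    rwa [hs] at this
  have h54 : (n : ℝ) + 5/4 = x + 1/2 := by rw [hxdef]; ring
  rw [h54, hxdef]
  calc Real.Gamma (x + 1/2) / Real.Gamma x ≤ Real.sqrt x := by
        rw [div_le_iff₀ h1]; linarith [hle]
    _ < Real.sqrt ((n : ℝ) + 1) := by
        apply Real.sqrt_lt_sqrt (le_of_lt hx0); rw [hxdef]; linarith
end

section
/- (Gautschi's inequality, extended to real argument.) For every real x > 0 and every s ∈ [0,1] one has (x+1)^{s−1} ≤ Γ(x+s)/Γ(x+1) ≤ x^{s−1}; moreover the second inequality is strict whenever 0 < s < 1. -/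
/-- Gautschi's inequality for the real Gamma function, extended to real argument. -/
theorem gautschi_inequality (x : ℝ) (hx : 0 < x) (s : ℝ) (hs0 : 0 ≤ s) (hs1 : s ≤ 1) :
    (x + 1) ^ (s - 1) ≤ Real.Gamma (x + s) / Real.Gamma (x + 1) ∧
    Real.Gamma (x + s) / Real.Gamma (x + 1) ≤ x ^ (s - 1) ∧
    (0 < s → s < 1 → Real.Gamma (x + s) / Real.Gamma (x + 1) < x ^ (s - 1)) := by
  set f : ℝ → ℝ := fun y => Real.log (Real.Gamma y) with hf
  have hconv : ConvexOn ℝ (Set.Ioi 0) f := Real.convexOn_log_Gamma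
  have hrec : ∀ y : ℝ, 0 < y → f (y + 1) = Real.log y + f y := by
    intro y hy
    simp only [hf]
    rw [Real.Gamma_add_one hy.ne', Real.log_mul hy.ne' (Real.Gamma_pos_of_pos hy).ne']
  have hxs : (0:ℝ) < x + s := by linarith
  have hx1 : (0:ℝ) < x + 1 := by linarith
  have hApos : 0 < Real.Gamma (x + s) := Real.Gamma_pos_of_pos hxs
  have hBpos : 0 < Real.Gamma (x + 1) := Real.Gamma_pos_of_pos hx1
  -- upper bound via convexity at x, x+1
  have hup : f (x + s) ≤ f (x + 1) + (s - 1) * Real.log x := by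
    have h := hconv.2 (Set.mem_Ioi.mpr hx) (Set.mem_Ioi.mpr hx1)
      (show (0:ℝ) ≤ 1 - s by linarith) hs0 (show (1 - s) + s = 1 by ring)
    have he : (1 - s) • x + s • (x + 1) = x + s := by simp [smul_eq_mul]; ring
    rw [he] at h
    have hfx1 : f (x + 1) = Real.log x + f x := hrec x hx
    simp only [smul_eq_mul] at h
    nlinarith [h]
  -- lower bound via convexity at x+s, x+s+1
  have hlow : f (x + 1) ≤ f (x + s) + (1 - s) * Real.log (x + s) := by
    have h := hconv.2 (Set.mem_Ioi.mpr hxs) (Set.mem_Ioi.mpr (by linarith : (0:ℝ) < x + s + 1))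
      hs0 (show (0:ℝ) ≤ 1 - s by linarith) (show s + (1 - s) = 1 by ring)
    have he : s • (x + s) + (1 - s) • (x + s + 1) = x + 1 := by simp [smul_eq_mul]; ring
    rw [he] at h
    have hfr : f (x + s + 1) = Real.log (x + s) + f (x + s) := hrec _ hxs
    simp only [smul_eq_mul] at h
    nlinarith [h]
  have hratio : Real.Gamma (x + s) / Real.Gamma (x + 1) = Real.exp (f (x + s) - f (x + 1)) := by
    rw [Real.exp_sub, Real.exp_log hApos, Real.exp_log hBpos]
  have hxpow : (x : ℝ) ^ (s - 1) = Real.exp ((s - 1) * Real.log x) := by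
    rw [Real.rpow_def_of_pos hx, mul_comm]
  have hx1pow : (x + 1 : ℝ) ^ (s - 1) = Real.exp ((s - 1) * Real.log (x + 1)) := by
    rw [Real.rpow_def_of_pos hx1, mul_comm]
  refine ⟨?_, ?_, ?_⟩
  · rw [hratio, hx1pow]
    apply Real.exp_le_exp.mpr
    have hlog : Real.log (x + s) ≤ Real.log (x + 1) :=
      Real.log_le_log hxs (by linarith)
    nlinarith [hlow]
  · rw [hratio, hxpow]
    exact Real.exp_le_exp.mpr (by linarith)
  · intro hs0' hs1'
    rw [hratio, hxpow]
    apply Real.exp_lt_exp.mpr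
    by_contra hcon
    push_neg at hcon
    have heq : f (x + s) = f (x + 1) + (s - 1) * Real.log x := le_antisymm hup (by linarith)
    have hfx1 : f (x + 1) = Real.log x + f x := hrec x hx
    -- so f(x+s) = (1-s) f x + s f (x+1)
    have heq2 : f (x + s) = (1 - s) * f x + s * f (x + 1) := by
      rw [heq, hfx1]; ring
    have hhp : (0:ℝ) < x + 1/2 := by linarith
    -- derive f(x) + f(x+1) ≤ 2 f(x+1/2)
    have hhalf : f x + f (x + 1) ≤ 2 * f (x + 1/2) := by
      rcases le_total s (1/2) with hc | hc
      · have h := hconv.2 (Set.mem_Ioi.mpr hx) (Set.mem_Ioi.mpr hhp)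
          (show (0:ℝ) ≤ 1 - 2*s by linarith) (show (0:ℝ) ≤ 2*s by linarith)
          (show (1 - 2*s) + 2*s = 1 by ring)
        have he : (1 - 2*s) • x + (2*s) • (x + 1/2) = x + s := by simp [smul_eq_mul]; ring
        rw [he] at h
        simp only [smul_eq_mul] at h
        rw [heq2] at h
        nlinarith [h]
      · have h := hconv.2 (Set.mem_Ioi.mpr hhp) (Set.mem_Ioi.mpr hx1)
          (show (0:ℝ) ≤ 2 - 2*s by linarith) (show (0:ℝ) ≤ 2*s - 1 by linarith)
          (show (2 - 2*s) + (2*s - 1) = 1 by ring)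
        have he : (2 - 2*s) • (x + 1/2) + (2*s - 1) • (x + 1) = x + s := by
          simp [smul_eq_mul]; ring
        rw [he] at h
        simp only [smul_eq_mul] at h
        rw [heq2] at h
        nlinarith [h]
    -- convexity at x+1, x+2 with midpoint x + 3/2
    have h := hconv.2 (Set.mem_Ioi.mpr hx1) (Set.mem_Ioi.mpr (by linarith : (0:ℝ) < x + 2))
      (show (0:ℝ) ≤ 1/2 by norm_num) (show (0:ℝ) ≤ 1/2 by norm_num)
      (show (1/2 : ℝ) + 1/2 = 1 by norm_num)
    have he : (1/2 : ℝ) • (x + 1) + (1/2 : ℝ) • (x + 2) = (x + 1/2) + 1 := by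
      simp [smul_eq_mul]; ring
    rw [he] at h
    simp only [smul_eq_mul] at h
    rw [hrec _ hhp] at h
    have hfx2 : f (x + 2) = Real.log (x + 1) + f (x + 1) := by
      have := hrec (x + 1) hx1
      rw [show x + 1 + 1 = x + 2 by ring] at this
      exact this
    rw [hfx2, hfx1] at h
    -- h : log(x+1/2) + f(x+1/2) ≤ 1/2 (log x + f x) + 1/2 (log(x+1) + log x + f x)
    -- combine with hhalf to get 2 log(x+1/2) ≤ log x + log(x+1)
    have hkey : 2 * Real.log (x + 1/2) ≤ Real.log x + Real.log (x + 1) := by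
      nlinarith [h, hhalf, hfx1]
    have h1 : Real.log ((x + 1/2)^2) = 2 * Real.log (x + 1/2) := by
      rw [Real.log_pow]; push_cast; ring
    have h2 : Real.log (x * (x + 1)) = Real.log x + Real.log (x + 1) :=
      Real.log_mul hx.ne' hx1.ne'
    have h3 : Real.log ((x + 1/2)^2) ≤ Real.log (x * (x + 1)) := by
      rw [h1, h2]; exact hkey
    have h4 : (x + 1/2)^2 ≤ x * (x + 1) :=
      (Real.log_le_log_iff (by positivity) (by positivity)).mp h3
    have h5 : x^2 + x + 1/4 ≤ x^2 + x := by linarith [sq_nonneg (x + 1/2), (by ring : (x + 1/2)^2 = x^2 + x + 1/4)]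
    linarith
end
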